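/- Let G be a split graph of order n that arises from the disjoint union of a clique C of order c and an independent set I of order n−c ≥ 1 by adding m edges, each joining a vertex of C to a vertex of I. Then Σ_{{u,u'}⊆C, u≠u'} |d_G(u) − d_G(u')| ≤ c·m − m²/(n−c). -/

import Mathlib

open Finset

/-- In a split graph of order `n` (clique `C` of order `c`, independent set `Cᶜ` of order
`n - c ≥ 1`, `m` cross edges), the sum of `|d(u) - d(u')|` over unordered pairs of distinct
vertices of `C` is at most `c·m - m²/(n-c)`. -/
theorem sum_degree_diff_le {V : Type*} [Fintype V] [DecidableEq V] (G : SimpleGraph V)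
    [DecidableRel G.Adj] (n c m : ℕ) (hn : Fintype.card V = n)
    (C : Finset V) (hC : C.card = c)
    (hclique : ∀ u ∈ C, ∀ v ∈ C, u ≠ v → G.Adj u v)
    (hindep : ∀ u ∉ C, ∀ v ∉ C, ¬ G.Adj u v)
    (hm : (G.edgeFinset.filter fun e => ∃ v ∈ e, v ∉ C).card = m)
    (hcn : c < n) :
    (1 / 2 : ℝ) * ∑ p ∈ C.offDiag, |(G.degree p.1 : ℝ) - (G.degree p.2 : ℝ)|
      ≤ (c : ℝ) * (m : ℝ) - (m : ℝ) ^ 2 / ((n : ℝ) - (c : ℝ)) := by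
  classical
  have hc_le : c ≤ n := hcn.le
  set M : ℝ := (n : ℝ) - c with hMdef
  have hM1 : (1 : ℝ) ≤ M := by
    have : (c : ℝ) + 1 ≤ n := by exact_mod_cast hcn
    simp only [hMdef]; linarith
  have hM0 : (0 : ℝ) < M := by linarith
  set b : V → ℕ := fun u => (G.neighborFinset u \ C).card with hbdef
  have hNC : ∀ u ∈ C, G.neighborFinset u ∩ C = C.erase u := by
    intro u hu
    ext w
    simp only [mem_inter, SimpleGraph.mem_neighborFinset, mem_erase]
    constructor
    · rintro ⟨hadj, hw⟩; exact ⟨(G.ne_of_adj hadj).symm, hw⟩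
    · rintro ⟨hne, hw⟩; exact ⟨hclique u hu w hw (Ne.symm hne), hw⟩
  have hdeg : ∀ u ∈ C, G.degree u = (c - 1) + b u := by
    intro u hu
    have : G.degree u = (G.neighborFinset u).card := rfl
    rw [this, ← Finset.card_inter_add_card_sdiff (G.neighborFinset u) C, hNC u hu,
      Finset.card_erase_of_mem hu, hC]
  have hc1 : ∀ u ∈ C, 1 ≤ c := by
    intro u hu; rw [← hC]; exact Finset.card_pos.mpr ⟨u, hu⟩
  have hdegR : ∀ u ∈ C, (G.degree u : ℝ) = (c : ℝ) - 1 + b u := by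
    intro u hu
    rw [hdeg u hu]
    have := hc1 u hu
    push_cast [Nat.cast_sub this]
    ring
  have hbleR : ∀ u, (b u : ℝ) ≤ M := by
    intro u
    have h1 : b u ≤ Cᶜ.card := by
      apply Finset.card_le_card
      intro w hw
      simp only [mem_sdiff] at hw
      simp [hw.2]
    have h2 : Cᶜ.card = n - c := by rw [Finset.card_compl, hC, hn]
    have : (b u : ℝ) ≤ ((n - c : ℕ) : ℝ) := by exact_mod_cast h1.trans h2.le
    rwa [Nat.cast_sub hc_le] at this
  -- the cross edge count
  have hsum : ∑ u ∈ C, b u = m := by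
    rw [← hm]
    set S : Finset (V × V) :=
      (C ×ˢ (Finset.univ : Finset V)).filter (fun p => G.Adj p.1 p.2 ∧ p.2 ∉ C) with hS
    have hmemS : ∀ p : V × V, p ∈ S ↔ p.1 ∈ C ∧ G.Adj p.1 p.2 ∧ p.2 ∉ C := by
      intro p; simp [hS, Finset.mem_filter, Finset.mem_product, and_assoc]
    have h1 : ∑ u ∈ C, b u = S.card := by
      rw [Finset.card_eq_sum_card_fiberwise (f := Prod.fst) (t := C)
        (fun p hp => ((hmemS p).mp hp).1)]
      apply Finset.sum_congr rfl
      intro u hu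
      show (G.neighborFinset u \ C).card = _
      apply Finset.card_nbij (i := fun w => (u, w))
      · intro w hw
        simp only [Finset.mem_coe, mem_sdiff, SimpleGraph.mem_neighborFinset] at hw
        simp only [Finset.mem_coe, Finset.mem_filter]
        exact ⟨(hmemS _).mpr ⟨hu, hw.1, hw.2⟩, trivial⟩
      · intro w _ x _ h
        exact (Prod.ext_iff.mp h).2
      · intro p hp
        simp only [Finset.coe_filter, Set.mem_setOf_eq] at hp
        obtain ⟨hpS, hp1⟩ := hp
        rw [hmemS] at hpS
        refine ⟨p.2, ?_, ?_⟩
        · simp only [Finset.mem_coe, mem_sdiff, SimpleGraph.mem_neighborFinset]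
          exact ⟨hp1 ▸ hpS.2.1, hpS.2.2⟩
        · exact Prod.ext hp1.symm rfl
    rw [h1]
    apply Finset.card_nbij (i := fun p => s(p.1, p.2))
    · intro p hp
      rw [Finset.mem_coe, hmemS] at hp
      simp only [Finset.mem_coe, Finset.mem_filter, SimpleGraph.mem_edgeFinset, SimpleGraph.mem_edgeSet]
      exact ⟨hp.2.1, ⟨p.2, Sym2.mem_iff.mpr (Or.inr rfl), hp.2.2⟩⟩
    · intro p hp q hq hpq
      rw [Finset.mem_coe, hmemS] at hp hq
      rw [Sym2.eq_iff] at hpq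
      rcases hpq with ⟨h1, h2⟩ | ⟨h1, h2⟩
      · exact Prod.ext h1 h2
      · exact absurd (h1 ▸ hp.1) hq.2.2
    · intro e he
      simp only [Finset.coe_filter, Set.mem_setOf_eq, SimpleGraph.mem_edgeFinset] at he
      obtain ⟨he, v, hve, hvC⟩ := he
      induction e with
      | h x y =>
        rw [SimpleGraph.mem_edgeSet] at he
        rw [Sym2.mem_iff] at hve
        rcases hve with rfl | rfl
        · -- v = x ∉ C, so y ∈ C
          have hy : y ∈ C := by
            by_contra hy
            exact hindep v hvC y hy he
          exact ⟨(y, v), Finset.mem_coe.mpr ((hmemS _).mpr ⟨hy, he.symm, hvC⟩), Sym2.eq_swap⟩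
        · have hx : x ∈ C := by
            by_contra hx
            exact hindep x hx v hvC he
          exact ⟨(x, v), Finset.mem_coe.mpr ((hmemS _).mpr ⟨hx, he, hvC⟩), rfl⟩
  have hsumR : ∑ u ∈ C, (b u : ℝ) = m := by exact_mod_cast hsum
  have hsq : ∑ u ∈ C, (b u : ℝ) ^ 2 ≤ M * m := by
    rw [← hsumR, Finset.mul_sum]
    apply Finset.sum_le_sum
    intro u _
    have h0 : (0 : ℝ) ≤ (b u : ℝ) := Nat.cast_nonneg _
    nlinarith [hbleR u]
  -- pointwise inequality
  have key : ∀ p ∈ C.offDiag, |(G.degree p.1 : ℝ) - (G.degree p.2 : ℝ)|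
      ≤ (b p.1 : ℝ) + (b p.2 : ℝ) - 2 / M * ((b p.1 : ℝ) * (b p.2 : ℝ)) := by
    intro p hp
    rw [Finset.mem_offDiag] at hp
    rw [hdegR p.1 hp.1, hdegR p.2 hp.2.1]
    have e1 : (c : ℝ) - 1 + (b p.1 : ℝ) - ((c : ℝ) - 1 + (b p.2 : ℝ))
        = (b p.1 : ℝ) - (b p.2 : ℝ) := by ring
    rw [e1, abs_sub_le_iff]
    have h1 : 2 / M * ((b p.1 : ℝ) * (b p.2 : ℝ)) ≤ 2 * (b p.2 : ℝ) := by
      rw [div_mul_eq_mul_div, div_le_iff₀ hM0]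
      nlinarith [hbleR p.1, Nat.cast_nonneg (α := ℝ) (b p.1), Nat.cast_nonneg (α := ℝ) (b p.2)]
    have h2 : 2 / M * ((b p.1 : ℝ) * (b p.2 : ℝ)) ≤ 2 * (b p.1 : ℝ) := by
      rw [div_mul_eq_mul_div, div_le_iff₀ hM0]
      nlinarith [hbleR p.2, Nat.cast_nonneg (α := ℝ) (b p.1), Nat.cast_nonneg (α := ℝ) (b p.2)]
    constructor <;> linarith
  have hstep : (1 / 2 : ℝ) * ∑ p ∈ C.offDiag, |(G.degree p.1 : ℝ) - (G.degree p.2 : ℝ)|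
      ≤ (1 / 2 : ℝ) * ∑ p ∈ C.offDiag,
        ((b p.1 : ℝ) + (b p.2 : ℝ) - 2 / M * ((b p.1 : ℝ) * (b p.2 : ℝ))) := by
    have := Finset.sum_le_sum key
    linarith
  refine hstep.trans ?_
  -- compute the sum
  have hfull : ∑ p ∈ C ×ˢ C, ((b p.1 : ℝ) + (b p.2 : ℝ) - 2 / M * ((b p.1 : ℝ) * (b p.2 : ℝ)))
      = 2 * (c : ℝ) * m - 2 / M * (m : ℝ) ^ 2 := by
    rw [Finset.sum_product]
    have inner : ∀ u ∈ C, ∑ v ∈ C, ((b u : ℝ) + (b v : ℝ) - 2 / M * ((b u : ℝ) * (b v : ℝ)))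
        = (c : ℝ) * (b u : ℝ) + m - 2 / M * ((b u : ℝ) * m) := by
      intro u _
      rw [Finset.sum_sub_distrib, Finset.sum_add_distrib, Finset.sum_const, hC,
        ← Finset.mul_sum, ← Finset.mul_sum, hsumR, nsmul_eq_mul]
    rw [Finset.sum_congr rfl inner, Finset.sum_sub_distrib, Finset.sum_add_distrib,
      Finset.sum_const, hC, ← Finset.mul_sum, ← Finset.mul_sum, ← Finset.sum_mul, hsumR,
      nsmul_eq_mul]
    ring
  have hdiag : ∑ p ∈ C.diag, ((b p.1 : ℝ) + (b p.2 : ℝ) - 2 / M * ((b p.1 : ℝ) * (b p.2 : ℝ)))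
      = 2 * m - 2 / M * ∑ u ∈ C, (b u : ℝ) ^ 2 := by
    rw [Finset.sum_diag]
    rw [Finset.sum_sub_distrib, Finset.sum_add_distrib, ← Finset.mul_sum, hsumR]
    congr 1
    · ring
    · congr 1; apply Finset.sum_congr rfl; intro u _; ring
  have hoff : ∑ p ∈ C.offDiag, ((b p.1 : ℝ) + (b p.2 : ℝ) - 2 / M * ((b p.1 : ℝ) * (b p.2 : ℝ)))
      = (2 * (c : ℝ) * m - 2 / M * (m : ℝ) ^ 2) - (2 * m - 2 / M * ∑ u ∈ C, (b u : ℝ) ^ 2) := by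
    rw [← hfull, ← hdiag, ← Finset.diag_union_offDiag C,
      Finset.sum_union (Finset.disjoint_diag_offDiag C)]
    ring
  rw [hoff]
  have hS : 2 / M * ∑ u ∈ C, (b u : ℝ) ^ 2 ≤ 2 * m := by
    rw [div_mul_eq_mul_div, div_le_iff₀ hM0]
    nlinarith [hsq]
  have hmsq : 1 / 2 * (2 / M * (m : ℝ) ^ 2) = (m : ℝ) ^ 2 / M := by
    field_simp
  nlinarith [hS]
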